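/- Let d ≥ 1 and α ≥ 0 with α < d, and let x₀, …, x_k be distinct reals with (k+1)(d − α) ≥ d + 1. Then the linear map from tuples (d₀, …, d_k) of polynomials of degree ≤ d − α − 1 to polynomials of degree ≤ d given by (d₀,…,d_k) ↦ ∑_{t=0}^k d_t(x)(x − x_t)^(α+1) is surjective. -/

import Mathlib

open Polynomial

open Finset

private lemma aux_expand (f : ℝ[X] →ₗ[ℝ] ℝ) (a s : ℝ) (d : ℕ) :
    f ((X - C s) ^ d) = ∑ j ∈ range (d + 1),
      ((-1 : ℝ) ^ (j + d) * (s - a) ^ (d - j) * d.choose j) * f ((X - C a) ^ j) := by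
  have h : (X - C s : ℝ[X]) = (X - C a) - C (s - a) := by rw [map_sub]; ring
  rw [h, sub_pow, map_sum]
  refine Finset.sum_congr rfl fun j _ => ?_
  have : ((-1 : ℝ[X]) ^ (j + d) * (X - C a) ^ j * (C (s - a)) ^ (d - j) * (d.choose j : ℝ[X]))
      = ((-1 : ℝ) ^ (j + d) * (s - a) ^ (d - j) * (d.choose j : ℝ)) • ((X - C a) ^ j : ℝ[X]) := by
    simp only [smul_eq_C_mul, C_mul, C_pow, C_neg, C_1, C_eq_natCast]
    ring
  rw [this, map_smul, smul_eq_mul]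

/-- Surjectivity of the single-edge conformality map when the edge has enough
vertices: if `(k+1)(d−α) ≥ d+1`, every polynomial `q` of degree at most `d` can
be written as `∑_t d_t(x)(x − x_t)^(α+1)` with `deg d_t ≤ d − α − 1`. -/
theorem conformality_surjective (d α k : ℕ) (hd : 1 ≤ d) (hαd : α < d)
    (x : Fin (k + 1) → ℝ) (hx : Function.Injective x)
    (hk : d + 1 ≤ (k + 1) * (d - α)) :
    ∀ q : ℝ[X], q.degree ≤ d →
      ∃ D : Fin (k + 1) → ℝ[X],
        (∀ t, (D t).degree < (d - α : ℕ)) ∧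
        ∑ t, D t * (X - C (x t)) ^ (α + 1) = q := by
  intro q hq
  set g : Fin (k + 1) × Fin (d - α) → ℝ[X] :=
    fun tp => X ^ (tp.2 : ℕ) * (X - C (x tp.1)) ^ (α + 1) with hg
  set W : Submodule ℝ ℝ[X] := Submodule.span ℝ (Set.range g) with hW
  -- Step A: products h * (X - x_t)^(α+1) with deg h < d - α lie in W
  have hA : ∀ (t : Fin (k + 1)) (h : ℝ[X]), h.natDegree < d - α →
      h * (X - C (x t)) ^ (α + 1) ∈ W := by
    intro t h hh
    have hrep := h.as_sum_range' (d - α) hh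
    rw [hrep, Finset.sum_mul]
    refine Submodule.sum_mem _ fun i hi => ?_
    have : (monomial i (h.coeff i) : ℝ[X]) * (X - C (x t)) ^ (α + 1)
        = (h.coeff i) • (X ^ i * (X - C (x t)) ^ (α + 1)) := by
      rw [← C_mul_X_pow_eq_monomial, smul_eq_C_mul]; ring
    rw [this]
    exact Submodule.smul_mem _ _ (Submodule.subset_span
      ⟨(t, ⟨i, Finset.mem_range.1 hi⟩), rfl⟩)
  -- main claim : q ∈ W
  have hqW : q ∈ W := by
    by_contra hqW
    obtain ⟨f, hfq0, hmap⟩ := Submodule.exists_dual_map_eq_bot_of_notMem hqW inferInstance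
    have hf0 : ∀ w ∈ W, f w = 0 := by
      intro w hw
      have : f w ∈ W.map f := Submodule.mem_map_of_mem hw
      rwa [hmap, Submodule.mem_bot] at this
    -- f kills (X - x_t)^j for α+1 ≤ j ≤ d
    have hfA : ∀ (t : Fin (k + 1)) (j : ℕ), α + 1 ≤ j → j ≤ d →
        f ((X - C (x t)) ^ j) = 0 := by
      intro t j hj1 hj2
      have h1 : (X - C (x t)) ^ j
          = (X - C (x t)) ^ (j - (α + 1)) * (X - C (x t)) ^ (α + 1) := by
        rw [← pow_add]; congr 1; omega
      refine h1 ▸ hf0 _ (hA t _ ?_)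
      have : ((X - C (x t)) ^ (j - (α + 1)) : ℝ[X]).natDegree = j - (α + 1) := by
        rw [natDegree_pow, natDegree_X_sub_C, mul_one]
      omega
    set G : ℝ[X] := ∑ i ∈ range (d + 1),
      C ((-1 : ℝ) ^ (i + d) * f (X ^ i) * d.choose i) * X ^ (d - i) with hGdef
    have hGeval : ∀ s : ℝ, G.eval s = f ((X - C s) ^ d) := by
      intro s
      rw [aux_expand f 0 s d, hGdef, eval_finset_sum]
      refine Finset.sum_congr rfl fun i _ => ?_
      simp only [eval_mul, eval_C, eval_pow, eval_X, C_0, sub_zero]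
      ring
    set H : Fin (k + 1) → ℝ[X] := fun t => ∑ j ∈ range (d + 1),
      C ((-1 : ℝ) ^ (j + d) * f ((X - C (x t)) ^ j) * d.choose j) * (X - C (x t)) ^ (d - j)
      with hHdef
    have hGH : ∀ t, G = H t := by
      intro t
      apply Polynomial.funext
      intro s
      rw [hGeval s, aux_expand f (x t) s d, hHdef, eval_finset_sum]
      refine Finset.sum_congr rfl fun j _ => ?_
      simp only [eval_mul, eval_C, eval_pow, eval_sub, eval_X]
      ring
    have hdvd : ∀ t, (X - C (x t)) ^ (d - α) ∣ G := by
      intro t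
      rw [hGH t, hHdef]
      refine Finset.dvd_sum fun j hj => ?_
      rcases le_or_gt j α with hjα | hjα
      · exact dvd_mul_of_dvd_right (pow_dvd_pow _ (by omega)) _
      · rw [hfA t j hjα (by have := Finset.mem_range.1 hj; omega), mul_zero, zero_mul,
          map_zero, zero_mul]
        exact dvd_zero _
    have hGdeg : G.degree ≤ (d : WithBot ℕ) := by
      refine (degree_sum_le _ _).trans ?_
      rw [Finset.sup_le_iff]
      intro i hi
      refine (degree_C_mul_X_pow_le _ _).trans ?_
      exact_mod_cast Nat.cast_le.2 (Nat.sub_le d i)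
    have hG0 : G = 0 := by
      by_contra hGne
      have hcop : Pairwise (Function.onFun IsCoprime fun t : Fin (k + 1) => (X - C (x t)) ^ (d - α)) :=
        fun t t' htt' => ((pairwise_coprime_X_sub_C hx) htt').pow
      have hprod : (∏ t, (X - C (x t)) ^ (d - α)) ∣ G :=
        Fintype.prod_dvd_of_coprime hcop fun t => hdvd t
      have hPdeg : (∏ t, ((X - C (x t)) ^ (d - α) : ℝ[X])).degree
          = (((k + 1) * (d - α) : ℕ) : WithBot ℕ) := by
        rw [degree_prod]
        simp only [degree_pow, degree_X_sub_C, nsmul_eq_mul, mul_one]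
        rw [Finset.sum_const, Finset.card_univ, Fintype.card_fin]
        simp [nsmul_eq_mul]
      have := (degree_le_of_dvd hprod hGne).trans hGdeg
      rw [hPdeg] at this
      have : (k + 1) * (d - α) ≤ d := by exact_mod_cast this
      omega
    have hfX : ∀ i ≤ d, f (X ^ i) = 0 := by
      intro i hi
      have hco : G.coeff (d - i) = (-1 : ℝ) ^ (i + d) * f (X ^ i) * d.choose i := by
        rw [hGdef, finset_sum_coeff]
        rw [Finset.sum_eq_single_of_mem i (Finset.mem_range.2 (by omega))]
        · rw [coeff_C_mul, coeff_X_pow, if_pos rfl, mul_one]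
        · intro b hb hbi
          have hb' := Finset.mem_range.1 hb
          rw [coeff_C_mul, coeff_X_pow, if_neg (by omega), mul_zero]
      rw [hG0, coeff_zero] at hco
      have h1 : ((-1 : ℝ) ^ (i + d)) ≠ 0 := by positivity
      have h2 : (d.choose i : ℝ) ≠ 0 := Nat.cast_ne_zero.2 (Nat.choose_pos hi).ne'
      have := hco.symm
      rcases mul_eq_zero.1 this with h | h
      · rcases mul_eq_zero.1 h with h' | h'
        · exact absurd h' h1
        · exact h'
      · exact absurd h h2
    have hnd : q.natDegree < d + 1 := Nat.lt_succ_of_le (natDegree_le_iff_degree_le.2 hq)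
    have hfq : f q = 0 := by
      conv_lhs => rw [q.as_sum_range' (d + 1) hnd]
      rw [map_sum]
      refine Finset.sum_eq_zero fun i hi => ?_
      rw [← C_mul_X_pow_eq_monomial, ← smul_eq_C_mul, map_smul,
        hfX i (by have := Finset.mem_range.1 hi; omega), smul_zero]
    exact hfq0 hfq
  -- extract the decomposition
  rw [hW, Submodule.mem_span_range_iff_exists_fun] at hqW
  obtain ⟨c, hc⟩ := hqW
  refine ⟨fun t => ∑ p : Fin (d - α), C (c (t, p)) * X ^ (p : ℕ), ?_, ?_⟩
  · intro t
    refine (degree_sum_le _ _).trans_lt ?_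
    rw [Finset.sup_lt_iff (by exact_mod_cast WithBot.bot_lt_coe (d - α))]
    intro p _
    refine (degree_C_mul_X_pow_le _ _).trans_lt ?_
    exact_mod_cast Nat.cast_lt.2 p.2
  · rw [← hc, Fintype.sum_prod_type]
    refine Finset.sum_congr rfl fun t _ => ?_
    rw [Finset.sum_mul]
    refine Finset.sum_congr rfl fun p _ => ?_
    rw [hg, smul_eq_C_mul]
    ring
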